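/- Let K be a number field of degree d over ℚ, and let L be a finite extension of K of degree n ≥ 3 (inside a fixed algebraic closure of K) such that L/K has no proper subextensions. Then there exists a constant c > 0, depending only on n and K, such that for every real Y ≥ 1, the number of nonzero x ∈ 𝓞_L with Tr^L_K(x) = 0 and house(x) ≤ Y is at most c · (Y · Δ_{L/K}^{−1/(n(n−1)d)})^{(n−1)d}. -/

import Mathlib

open NumberField Module Metric MeasureTheory ENNReal Polynomial

/-- `Δ_{L/K}`: the absolute norm of the relative discriminant of `L/K`, computed as the
absolute norm of the different ideal of `𝓞_L` over `𝓞_K` (and junk value `0` if `L/K` is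
not finite). -/
noncomputable def relDiscNorm (K : Type*) [Field K] [NumberField K]
    {Kbar : Type*} [Field Kbar] [Algebra K Kbar]
    (L : IntermediateField K Kbar) : ℕ := by
  classical
  exact if h : FiniteDimensional K L then
    haveI : CharZero L := charZero_of_injective_algebraMap (algebraMap K L).injective
    haveI : FiniteDimensional ℚ L := Module.Finite.trans (R := ℚ) K L
    haveI : NumberField L :=
      { to_charZero := inferInstance, to_finiteDimensional := inferInstance }
    Ideal.absNorm (differentIdeal (𝓞 K) (𝓞 L))
  else 0

/-- The house of an algebraic integer: the largest complex absolute value of the roots of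
its minimal polynomial over `ℤ`. -/
noncomputable def house' {F : Type*} [Field F] (x : F) : ℝ :=
  sSup ((fun z : ℂ => ‖z‖) '' ((minpoly ℤ x).rootSet ℂ))

-- auxiliary: separated bounded sets in finite-dimensional normed spaces are finite with
-- cardinality bounded by a volume packing argument
lemma sep_finite_card_le {F : Type*} [NormedAddCommGroup F] [NormedSpace ℝ F]
    [FiniteDimensional ℝ F] {s : Set F} {R r : ℝ} (hr : 0 < r) (hR : 0 ≤ R)
    (hball : s ⊆ Metric.closedBall 0 R)
    (hsep : ∀ x ∈ s, ∀ y ∈ s, x ≠ y → r ≤ dist x y) :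
    s.Finite ∧ (Nat.card s : ℝ) ≤ ((2 * R + r) / r) ^ (finrank ℝ F) := by
  classical
  -- finiteness
  have hfin : s.Finite := by
    obtain ⟨t, htf, hcov⟩ := (totallyBounded_iff.mp
      (isCompact_closedBall (0 : F) R).totallyBounded) (r / 2) (by positivity)
    have hsub : s ⊆ ⋃ y ∈ t, s ∩ ball y (r / 2) := by
      intro x hx
      obtain ⟨y, hy, hxy⟩ := Set.mem_iUnion₂.mp (hcov (hball hx))
      exact Set.mem_iUnion₂.mpr ⟨y, hy, hx, hxy⟩
    refine Set.Finite.subset (Set.Finite.biUnion htf fun y _ => ?_) hsub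
    refine Set.Subsingleton.finite fun a ha b hb => ?_
    by_contra hab
    have := hsep a ha.1 b hb.1 hab
    have : dist a b < r := by
      calc dist a b ≤ dist a y + dist y b := dist_triangle _ _ _
        _ < r / 2 + r / 2 := by
            rw [dist_comm y b]
            exact add_lt_add ha.2 hb.2
        _ = r := by ring
    linarith [hsep a ha.1 b hb.1 hab]
  refine ⟨hfin, ?_⟩
  rcases subsingleton_or_nontrivial F with hF | hF
  · have hs : s.Subsingleton := fun a _ b _ => Subsingleton.elim a b
    have : Nat.card s ≤ 1 := by
      rw [Nat.card_coe_set_eq]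
      exact (Set.ncard_le_one hfin).mpr fun a ha b hb => hs ha hb
    have h1 : (1 : ℝ) ≤ ((2 * R + r) / r) ^ (finrank ℝ F) := by
      apply one_le_pow₀
      rw [le_div_iff₀ hr]
      linarith
    calc (Nat.card s : ℝ) ≤ 1 := by exact_mod_cast this
      _ ≤ _ := h1
  · borelize F
    set d := finrank ℝ F
    let b := Module.finBasis ℝ F
    set ν : Measure F := b.addHaar with hν
    haveI : ν.IsAddHaarMeasure := by rw [hν]; infer_instance
    set fs := hfin.toFinset with hfs
    have hdisj : (fs : Set F).Pairwise (Function.onFun Disjoint fun x => ball x (r / 2)) := by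
      intro x hx y hy hxy
      refine ball_disjoint_ball ?_
      have := hsep x (by simpa [hfs] using hx) y (by simpa [hfs] using hy) hxy
      linarith
    have hmeas : ∑ x ∈ fs, ν (ball x (r / 2)) = ν (⋃ x ∈ fs, ball x (r / 2)) :=
      (measure_biUnion_finset hdisj fun _ _ => measurableSet_ball).symm
    have hsubball : (⋃ x ∈ fs, ball x (r / 2)) ⊆ closedBall 0 (R + r / 2) := by
      intro z hz
      obtain ⟨x, hx, hzx⟩ := Set.mem_iUnion₂.mp hz
      have hxs : x ∈ s := by simpa [hfs] using hx
      have := hball hxs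
      rw [mem_closedBall] at this ⊢
      calc dist z 0 ≤ dist z x + dist x 0 := dist_triangle _ _ _
        _ ≤ r / 2 + R := add_le_add hzx.le this
        _ = R + r / 2 := by ring
    have hcount : (fs.card : ℝ≥0∞) * ν (ball 0 (r / 2)) ≤ ν (closedBall 0 (R + r / 2)) := by
      calc (fs.card : ℝ≥0∞) * ν (ball 0 (r / 2))
          = ∑ _x ∈ fs, ν (ball 0 (r / 2)) := by rw [Finset.sum_const, nsmul_eq_mul]
        _ = ∑ x ∈ fs, ν (ball x (r / 2)) := by
            refine Finset.sum_congr rfl fun x _ => ?_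
            exact (Measure.addHaar_ball_center ν x (r/2)).symm
        _ = ν (⋃ x ∈ fs, ball x (r / 2)) := hmeas
        _ ≤ ν (closedBall 0 (R + r / 2)) := measure_mono hsubball
    rw [Measure.addHaar_ball ν _ (by positivity : (0:ℝ) ≤ r / 2),
      Measure.addHaar_closedBall ν _ (by positivity : (0:ℝ) ≤ R + r / 2)] at hcount
    have hBpos : 0 < ν (ball (0:F) 1) := measure_ball_pos ν _ one_pos
    have hBtop : ν (ball (0:F) 1) ≠ ⊤ := measure_ball_lt_top.ne
    have hcount2 : (fs.card : ℝ≥0∞) * ENNReal.ofReal ((r / 2) ^ d)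
        ≤ ENNReal.ofReal ((R + r / 2) ^ d) :=
      (ENNReal.mul_le_mul_iff_left hBpos.ne' hBtop).mp (by rwa [← mul_assoc] at hcount)
    have hABr : (fs.card : ℝ) * ((r / 2) ^ d) ≤ (R + r / 2) ^ d := by
      have := hcount2
      rw [show ((fs.card : ℝ≥0∞)) = ENNReal.ofReal (fs.card : ℝ) by
            rw [ENNReal.ofReal_natCast], ← ENNReal.ofReal_mul (by positivity)] at this
      exact (ENNReal.ofReal_le_ofReal_iff (by positivity)).mp this
    have hcard : (Nat.card s : ℝ) = (fs.card : ℝ) := by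
      rw [Nat.card_coe_set_eq, Set.ncard_eq_toFinset_card _ hfin]
    rw [hcard]
    have hhalf : (0:ℝ) < (r / 2) ^ d := by positivity
    rw [← le_div_iff₀ hhalf] at hABr
    refine hABr.trans (le_of_eq ?_)
    rw [← div_pow]
    congr 1
    field_simp



lemma multiset_prod_le_pow {s : Multiset ℝ} {c : ℝ} (hc : 0 ≤ c)
    (h : ∀ x ∈ s, 0 ≤ x ∧ x ≤ c) : s.prod ≤ c ^ Multiset.card s := by
  induction s using Multiset.induction with
  | empty => simp
  | cons a s ih =>
    rw [Multiset.prod_cons, Multiset.card_cons, pow_succ, mul_comm (c ^ Multiset.card s) c]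
    have ha := h a (Multiset.mem_cons_self a s)
    have hs : ∀ x ∈ s, 0 ≤ x ∧ x ≤ c := fun x hx => h x (Multiset.mem_cons_of_mem hx)
    have hprod : 0 ≤ s.prod := Multiset.prod_nonneg fun x hx => (hs x hx).1
    exact mul_le_mul ha.2 (ih hs) hprod hc

lemma delta_le_bound (K : Type) [Field K] [NumberField K]
    (L : Type) [Field L] [NumberField L] [Algebra K L]
    (z : 𝓞 L) (hz0 : (z : L) ≠ 0)
    (hadj : Algebra.adjoin K {(algebraMap (𝓞 L) L z)} = ⊤)
    (R : ℝ) (hR : ∀ σ : L →+* ℂ, ‖σ (algebraMap (𝓞 L) L z)‖ ≤ R) :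
    0 < Ideal.absNorm (differentIdeal (𝓞 K) (𝓞 L)) ∧
      (Ideal.absNorm (differentIdeal (𝓞 K) (𝓞 L)) : ℝ) ≤
        (2 * R) ^ ((finrank K L - 1) * finrank ℚ L) := by
  classical
  haveI : NoZeroSMulDivisors (𝓞 K) (𝓞 L) := by
    suffices hinj : Function.Injective (algebraMap (𝓞 K) (𝓞 L)) by
      exact ⟨fun {c x} h => by
        rw [Algebra.smul_def, mul_eq_zero, map_eq_zero_iff _ hinj] at h
        exact h⟩
    have h1 : Function.Injective (algebraMap (𝓞 K) L) := by
      rw [IsScalarTower.algebraMap_eq (𝓞 K) K L]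
      exact (algebraMap K L).injective.comp (IsFractionRing.injective (𝓞 K) K)
    rw [IsScalarTower.algebraMap_eq (𝓞 K) (𝓞 L) L, RingHom.coe_comp] at h1
    exact h1.of_comp
  set zL : L := algebraMap (𝓞 L) L z with hzL
  have hzint : IsIntegral (𝓞 K) z := IsIntegral.tower_top (IsIntegralClosure.isIntegral ℤ L z)
  set n : ℕ := finrank K L with hnn
  -- the minimal polynomial over K
  set f : K[X] := minpoly K zL with hf
  have hKint : IsIntegral K zL := Algebra.IsIntegral.isIntegral zL
  have hfmap : f = (minpoly (𝓞 K) z).map (algebraMap (𝓞 K) K) :=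
    minpoly.isIntegrallyClosed_eq_field_fractions K L hzint
  -- degree of f is n
  have hdeg : f.natDegree = n := by
    have h1 : IntermediateField.adjoin K {zL} = ⊤ := by
      apply IntermediateField.toSubalgebra_injective
      rw [IntermediateField.adjoin_simple_toSubalgebra_of_isAlgebraic hKint.isAlgebraic, hadj]
      rfl
    have h2 := IntermediateField.adjoin.finrank hKint
    have h3 : finrank K (IntermediateField.adjoin K {zL}) = finrank K L := by
      rw [h1]
      exact IntermediateField.finrank_top'
    rw [h2] at h3
    exact h3
  haveI : IsScalarTower ℚ K L := IsScalarTower.of_algebraMap_eq' (Subsingleton.elim _ _)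
  -- the element f'(z) of the different ideal
  set w : 𝓞 L := aeval z (derivative (minpoly (𝓞 K) z)) with hw
  have hwmem : w ∈ differentIdeal (𝓞 K) (𝓞 L) :=
    aeval_derivative_mem_differentIdeal (𝓞 K) K L z hadj
  set wL : L := algebraMap (𝓞 L) L w with hwL
  have hwLeq : wL = aeval zL (derivative f) := by
    rw [hwL, hw, hfmap, derivative_map, aeval_map_algebraMap, hzL, aeval_algebraMap_apply]
  have hwLne : wL ≠ 0 := by
    rw [hwLeq, hf]
    exact (Algebra.IsSeparable.isSeparable K zL).aeval_derivative_ne_zero (minpoly.aeval K zL)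
  have hwne : w ≠ 0 := by
    intro h
    exact hwLne (by rw [hwL, h, map_zero])
  -- divisibility of absolute norms
  have hdvd : Ideal.absNorm (differentIdeal (𝓞 K) (𝓞 L)) ∣ Ideal.absNorm (Ideal.span {w}) :=
    Ideal.absNorm_dvd_absNorm_of_le ((Ideal.span_singleton_le_iff_mem _).mpr hwmem)
  have hspanpos : 0 < Ideal.absNorm (Ideal.span {w}) := by
    rw [pos_iff_ne_zero, Ne, Ideal.absNorm_eq_zero_iff, Ideal.span_singleton_eq_bot]
    exact hwne
  have hpos : 0 < Ideal.absNorm (differentIdeal (𝓞 K) (𝓞 L)) := by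
    rcases Nat.eq_zero_or_pos (Ideal.absNorm (differentIdeal (𝓞 K) (𝓞 L))) with h | h
    · rw [h] at hdvd
      exact absurd (Nat.eq_zero_of_zero_dvd hdvd) hspanpos.ne'
    · exact h
  refine ⟨hpos, ?_⟩
  have hΔle : (Ideal.absNorm (differentIdeal (𝓞 K) (𝓞 L)) : ℝ) ≤
      (Ideal.absNorm (Ideal.span {w}) : ℝ) := by
    exact_mod_cast Nat.le_of_dvd hspanpos hdvd
  -- nonneg of R
  have hNE : Nonempty (L →ₐ[ℚ] ℂ) := by
    rw [← Fintype.card_pos_iff, AlgHom.card]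
    exact finrank_pos
  obtain ⟨σ₀⟩ := hNE
  have hR0 : 0 ≤ R := le_trans (norm_nonneg _) (hR σ₀.toRingHom)
  -- per-embedding bound
  have hσ : ∀ σ : L →ₐ[ℚ] ℂ, ‖σ wL‖ ≤ (2 * R) ^ (n - 1) := by
    intro σ
    set ρ : K →+* ℂ := (σ.toRingHom).comp (algebraMap K L) with hρ
    have hcomm : ∀ p : K[X], σ (aeval zL p) = (p.map ρ).eval (σ zL) := by
      intro p
      calc σ (aeval zL p) = σ.toRingHom (eval₂ (algebraMap K L) zL p) := by rw [aeval_def]; rfl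
        _ = eval₂ (σ.toRingHom.comp (algebraMap K L)) (σ.toRingHom zL) p := hom_eval₂ _ _ _ _
        _ = (p.map ρ).eval (σ zL) := by rw [← hρ, eval₂_eq_eval_map]; rfl
    set g : Polynomial ℂ := f.map ρ with hg
    have hg0 : g.eval (σ zL) = 0 := by
      rw [hg, ← hcomm f, hf, minpoly.aeval, map_zero]
    have hgmonic : g.Monic := (minpoly.monic hKint).map ρ
    have hgdeg : g.natDegree = n := by
      rw [hg, natDegree_map, hdeg]
    have hcardroots : Multiset.card g.roots = n := by
      rw [← hgdeg]
      exact splits_iff_card_roots.mp (IsAlgClosed.splits g)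
    -- all roots of g are of absolute value at most R
    have hroots : ∀ a ∈ g.roots, ‖a‖ ≤ R := by
      intro a ha
      have hisroot : g.IsRoot a := (mem_roots'.mp ha).2
      have hzint' : IsIntegral ℚ zL := Algebra.IsIntegral.isIntegral zL
      have hdvd1 : f ∣ (minpoly ℚ zL).map (algebraMap ℚ K) :=
        minpoly.dvd_map_of_isScalarTower ℚ K zL
      have hdvd2 : g ∣ (minpoly ℚ zL).map (algebraMap ℚ ℂ) := by
        have := Polynomial.map_dvd ρ hdvd1
        rwa [map_map, (Subsingleton.elim (ρ.comp (algebraMap ℚ K)) (algebraMap ℚ ℂ))] at this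
      have hq0 : ((minpoly ℚ zL).map (algebraMap ℚ ℂ)).eval a = 0 := by
        obtain ⟨c, hc⟩ := hdvd2
        rw [hc, eval_mul, hisroot.eq_zero, zero_mul]
      have hmem : a ∈ (minpoly ℚ zL).rootSet ℂ := by
        rw [Polynomial.mem_rootSet]
        exact ⟨minpoly.ne_zero hzint', by rwa [aeval_def, eval₂_eq_eval_map]⟩
      rw [← NumberField.Embeddings.range_eval_eq_rootSet_minpoly L ℂ] at hmem
      obtain ⟨φ, hφ⟩ := hmem
      rw [← hφ]
      exact hR φ
    have hσz : ‖σ zL‖ ≤ R := hR σ.toRingHom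
    have hroot : σ zL ∈ g.roots := mem_roots'.mpr ⟨hgmonic.ne_zero, hg0⟩
    -- compute σ wL
    rw [hwLeq, hcomm (derivative f), ← derivative_map, ← hg]
    have heval : eval (σ zL) (derivative g) =
        ((g.roots.erase (σ zL)).map (fun a => σ zL - a)).prod := by
      conv_lhs => rw [(IsAlgClosed.splits g).eq_prod_roots_of_monic hgmonic]
      exact eval_multiset_prod_X_sub_C_derivative hroot
    rw [heval, ← normHom_apply, map_multiset_prod, Multiset.map_map]
    have hbound : ∀ x ∈ (g.roots.erase (σ zL)).map
        (fun a => ‖σ zL - a‖), 0 ≤ x ∧ x ≤ 2 * R := by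
      intro x hx
      obtain ⟨a, ha, rfl⟩ := Multiset.mem_map.mp hx
      refine ⟨norm_nonneg _, ?_⟩
      calc ‖σ zL - a‖ ≤ ‖σ zL‖ + ‖a‖ :=
            norm_sub_le _ _
        _ ≤ R + R := add_le_add hσz (hroots a (Multiset.mem_of_mem_erase ha))
        _ = 2 * R := by ring
    have := multiset_prod_le_pow (by linarith : (0:ℝ) ≤ 2 * R) hbound
    rwa [Multiset.card_map, Multiset.card_erase_of_mem hroot, hcardroots] at this
  -- assemble
  have habs : (Ideal.absNorm (Ideal.span {w}) : ℝ) = ∏ σ : L →ₐ[ℚ] ℂ, ‖σ wL‖ := by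
    rw [Ideal.absNorm_span_singleton]
    have h1 : ((Algebra.norm ℤ w).natAbs : ℝ) = |((Algebra.norm ℤ w : ℤ) : ℝ)| := by
      rw [Nat.cast_natAbs, Int.cast_abs]
    have h2 : Algebra.norm ℚ wL = ((Algebra.norm ℤ w : ℤ) : ℚ) := (Algebra.coe_norm_int w).symm
    have h3 : ‖algebraMap ℚ ℂ (Algebra.norm ℚ wL)‖ =
        ∏ σ : L →ₐ[ℚ] ℂ, ‖σ wL‖ := by
      rw [Algebra.norm_eq_prod_embeddings, norm_prod]
    rw [← h3, h2]
    have h4 : (algebraMap ℚ ℂ) (((Algebra.norm ℤ w : ℤ) : ℚ)) =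
        (((Algebra.norm ℤ w : ℤ) : ℝ) : ℂ) := by
      push_cast
      rfl
    rw [h4, Complex.norm_real, Real.norm_eq_abs, Nat.cast_natAbs, Int.cast_abs]
  have hfinal : (Ideal.absNorm (Ideal.span {w}) : ℝ) ≤ (2 * R) ^ ((n - 1) * finrank ℚ L) := by
    rw [habs]
    calc ∏ σ : L →ₐ[ℚ] ℂ, ‖σ wL‖
        ≤ ∏ _σ : L →ₐ[ℚ] ℂ, (2 * R) ^ (n - 1) :=
          Finset.prod_le_prod (fun σ _ => norm_nonneg _) (fun σ _ => hσ σ)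
      _ = ((2 * R) ^ (n - 1)) ^ (Fintype.card (L →ₐ[ℚ] ℂ)) := by
          rw [Finset.prod_const, Finset.card_univ]
      _ = (2 * R) ^ ((n - 1) * finrank ℚ L) := by
          rw [← pow_mul, AlgHom.card]
  exact hΔle.trans hfinal


set_option maxHeartbeats 1000000

/-- if `L/K` has degree `n ≥ 3` and no proper subextensions, then the number
of nonzero trace-zero integers `x ∈ 𝓞_L` with `house(x) ≤ Y` is at most
`c · (Y · Δ_{L/K}^{-1/(n(n-1)d)})^{(n-1)d}`, with `c` depending only on `n` and `K`. -/
theorem count_traceZero_integers_small_house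
    (K : Type) [Field K] [NumberField K]
    (Kbar : Type) [Field Kbar] [Algebra K Kbar] [IsAlgClosure K Kbar]
    (n : ℕ) (hn : 3 ≤ n) :
    ∃ c : ℝ, 0 < c ∧
      ∀ L : IntermediateField K Kbar, finrank K L = n →
        (∀ M : IntermediateField K L, M = ⊥ ∨ M = ⊤) →
        ∀ Y : ℝ, 1 ≤ Y →
          {x : L | x ≠ 0 ∧ IsIntegral ℤ x ∧ Algebra.trace K L x = 0 ∧
            house' x ≤ Y}.Finite ∧
          (Nat.card {x : L | x ≠ 0 ∧ IsIntegral ℤ x ∧ Algebra.trace K L x = 0 ∧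
              house' x ≤ Y} : ℝ) ≤
            c * (Y * (relDiscNorm K L : ℝ) ^
                (-(1 : ℝ) / ((n : ℝ) * ((n : ℝ) - 1) * (finrank ℚ K : ℝ)))) ^
              ((n - 1) * finrank ℚ K) := by
  classical
  have hd0 : 0 < finrank ℚ K := finrank_pos
  set d := finrank ℚ K with hd
  set p := (n - 1) * d with hp
  have hp0 : 0 < p := by
    rw [hp]
    exact Nat.mul_pos (by omega) hd0
  refine ⟨(6 : ℝ) ^ p, by positivity, ?_⟩
  intro L hLn hM Y hY
  have hY0 : (0 : ℝ) < Y := lt_of_lt_of_le one_pos hY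
  haveI hfdKL : FiniteDimensional K L := FiniteDimensional.of_finrank_pos (by rw [hLn]; omega)
  haveI : CharZero L := charZero_of_injective_algebraMap (algebraMap K L).injective
  haveI : FiniteDimensional ℚ L := Module.Finite.trans (R := ℚ) K L
  haveI : NumberField L :=
    { to_charZero := inferInstance, to_finiteDimensional := inferInstance }
  have hΔdef : relDiscNorm K L = Ideal.absNorm (differentIdeal (𝓞 K) (𝓞 L)) := by
    rw [relDiscNorm, dif_pos hfdKL]
  set Δ : ℕ := relDiscNorm K L with hΔ
  set m : ℕ := finrank ℚ L with hm
  have hmnd : m = n * d := by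
    rw [hm, hd, ← hLn, ← Module.finrank_mul_finrank ℚ K L]
    ring
  -- the embedding of L into ℂ^(number of embeddings)
  set ι := (L →+* ℂ) with hι
  let emb : L →ₗ[ℚ] (ι → ℂ) :=
    LinearMap.pi (fun φ : ι => (RingHom.equivRatAlgHom _ _ φ).toLinearMap)
  have hembapply : ∀ (x : L) (φ : ι), emb x φ = φ x := by
    intro x φ
    rfl
  have hembinj : Function.Injective emb := by
    intro a b hab
    have hne : Nonempty ι := by
      rw [hι, ← Fintype.card_pos_iff, NumberField.Embeddings.card]
      exact finrank_pos
    obtain ⟨φ⟩ := hne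
    have h1 : φ a = φ b := by
      have := congrFun hab φ
      rwa [hembapply, hembapply] at this
    exact φ.injective h1
  set S := {x : L | x ≠ 0 ∧ IsIntegral ℤ x ∧ Algebra.trace K L x = 0 ∧ house' x ≤ Y} with hS
  -- bound on embeddings via the house
  have hhouse : ∀ (x : L), IsIntegral ℤ x → ∀ φ : ι, ‖φ x‖ ≤ house' x := by
    intro x hx φ
    have hpne : minpoly ℤ x ≠ 0 := minpoly.ne_zero hx
    have heval : (Polynomial.aeval (φ x)) (minpoly ℤ x) = 0 := by
      calc (Polynomial.aeval (φ x)) (minpoly ℤ x)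
          = Polynomial.eval₂ (algebraMap ℤ ℂ) (φ x) (minpoly ℤ x) := by
            rw [Polynomial.aeval_def]
        _ = φ (Polynomial.eval₂ (algebraMap ℤ L) x (minpoly ℤ x)) := by
            rw [Polynomial.hom_eval₂]
            congr 1
            exact Subsingleton.elim _ _
        _ = 0 := by
            rw [← Polynomial.aeval_def, minpoly.aeval, map_zero]
    have hmem : φ x ∈ (minpoly ℤ x).rootSet ℂ := by
      rw [Polynomial.mem_rootSet]
      exact ⟨hpne, heval⟩
    unfold house'
    apply le_csSup
    · exact (((minpoly ℤ x).rootSet ℂ).toFinite.image _).bddAbove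
    · exact ⟨φ x, hmem, rfl⟩
  have hnormY : ∀ x ∈ S, ‖emb x‖ ≤ Y := by
    intro x hx
    rw [pi_norm_le_iff_of_nonneg hY0.le]
    intro φ
    rw [hembapply]
    calc ‖φ x‖ = ‖φ x‖ := rfl
      _ ≤ house' x := hhouse x hx.2.1 φ
      _ ≤ Y := hx.2.2.2
  -- trace-zero nonzero elements generate L over K
  have hgen : ∀ z : L, z ≠ 0 → Algebra.trace K L z = 0 → Algebra.adjoin K {z} = ⊤ := by
    intro z hz0 hztr
    have hzK : IsIntegral K z := Algebra.IsIntegral.isIntegral z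
    have h1 : (IntermediateField.adjoin K {z}).toSubalgebra = Algebra.adjoin K {z} :=
      IntermediateField.adjoin_simple_toSubalgebra_of_isAlgebraic hzK.isAlgebraic
    rcases hM (IntermediateField.adjoin K {z}) with hbot | htop
    · exfalso
      have hz : z ∈ (⊥ : IntermediateField K L) :=
        hbot ▸ IntermediateField.mem_adjoin_simple_self K z
      rw [IntermediateField.mem_bot] at hz
      obtain ⟨c, hc⟩ := hz
      rw [← hc, Algebra.trace_algebraMap] at hztr
      have hc0 : c = 0 := by
        have hn0 : ((finrank K L : K)) ≠ 0 := by
          rw [hLn]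
          exact Nat.cast_ne_zero.mpr (by omega)
        rw [nsmul_eq_mul] at hztr
        rcases mul_eq_zero.mp hztr with h | h
        · exact absurd h hn0
        · exact h
      rw [hc0, map_zero] at hc
      exact hz0 hc.symm
    · rw [← h1, htop]
      exact IntermediateField.top_toSubalgebra
  -- the key diophantine bound
  have hkey : ∀ z : L, z ≠ 0 → IsIntegral ℤ z → Algebra.trace K L z = 0 →
      0 < Δ ∧ (Δ : ℝ) ≤ (2 * ‖emb z‖) ^ ((n - 1) * m) := by
    intro z hz0 hzint hztr
    set z' : 𝓞 L := ⟨z, hzint⟩ with hz'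
    have hz'map : algebraMap (𝓞 L) L z' = z := rfl
    have hadj : Algebra.adjoin K {(algebraMap (𝓞 L) L z')} = ⊤ := by
      rw [hz'map]
      exact hgen z hz0 hztr
    have hR : ∀ σ : L →+* ℂ, ‖σ (algebraMap (𝓞 L) L z')‖ ≤ ‖emb z‖ := by
      intro σ
      rw [hz'map]
      calc ‖σ z‖ = ‖emb z σ‖ := by rw [hembapply]
        _ ≤ ‖emb z‖ := norm_le_pi_norm _ σ
    have hb := delta_le_bound K L z' (by exact hz0) hadj (‖emb z‖) hR
    rw [← hΔdef, hLn, ← hm] at hb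
    exact hb
  rcases Set.eq_empty_or_nonempty S with hSe | hSne
  · constructor
    · rw [hSe]
      exact Set.finite_empty
    · have hc0 : Nat.card S = 0 := by
        rw [hSe]
        simp
      rw [hc0]
      push_cast
      have h1 : (0:ℝ) ≤ Y * (Δ : ℝ) ^
          (-(1 : ℝ) / ((n : ℝ) * ((n : ℝ) - 1) * (d : ℝ))) :=
        mul_nonneg hY0.le (Real.rpow_nonneg (Nat.cast_nonneg _) _)
      positivity
  · obtain ⟨x₀, hx₀⟩ := hSne
    have hx₀' : x₀ ≠ 0 ∧ IsIntegral ℤ x₀ ∧ Algebra.trace K L x₀ = 0 ∧ house' x₀ ≤ Y := hx₀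
    have hΔpos : 0 < Δ := (hkey x₀ hx₀'.1 hx₀'.2.1 hx₀'.2.2.1).1
    set DD : ℝ := (Δ : ℝ) with hDD
    have hDD1 : (1:ℝ) ≤ DD := by
      rw [hDD]
      exact_mod_cast hΔpos
    have hDDpos : (0:ℝ) < DD := lt_of_lt_of_le one_pos hDD1
    set enat : ℕ := (n - 1) * m with henat
    have henp : enat = n * p := by
      rw [henat, hmnd, hp]
      ring
    have he0 : 0 < enat := by
      rw [henp]
      exact Nat.mul_pos (by omega) hp0
    set e : ℝ := (enat : ℝ) with he
    have heR : (0:ℝ) < e := by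
      rw [he]
      exact_mod_cast he0
    set μ : ℝ := DD ^ ((1:ℝ)/e) / 2 with hμ
    have hμpos : 0 < μ := by
      rw [hμ]
      positivity
    -- separation property
    have hsep' : ∀ z : L, z ≠ 0 → IsIntegral ℤ z → Algebra.trace K L z = 0 →
        μ ≤ ‖emb z‖ := by
      intro z h1 h2 h3
      have hb := (hkey z h1 h2 h3).2
      have h4 : DD ^ ((1:ℝ)/e) ≤ ((2 * ‖emb z‖) ^ enat) ^ ((1:ℝ)/e) :=
        Real.rpow_le_rpow hDDpos.le (by rwa [henat]) (by positivity)
      have h5 : ((2 * ‖emb z‖) ^ enat) ^ ((1:ℝ)/e) = 2 * ‖emb z‖ := by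
        rw [← Real.rpow_natCast (2 * ‖emb z‖) enat, ← Real.rpow_mul (by positivity), ← he,
          mul_one_div, div_self heR.ne', Real.rpow_one]
      rw [h5] at h4
      rw [hμ]
      linarith
    -- the trace-zero subspace over ℚ
    set tr : L →ₗ[ℚ] K := (Algebra.trace K L).restrictScalars ℚ with htr
    have htrapply : ∀ x : L, tr x = Algebra.trace K L x := fun x => rfl
    set V' : Submodule ℚ L := LinearMap.ker tr with hV'
    have hnK0 : ((n : K)) ≠ 0 := Nat.cast_ne_zero.mpr (by omega)
    have hsurj : Function.Surjective tr := by
      intro c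
      refine ⟨algebraMap K L (c / (n:K)), ?_⟩
      rw [htrapply, Algebra.trace_algebraMap, hLn, nsmul_eq_mul, mul_div_cancel₀ _ hnK0]
    have hV'rank : finrank ℚ V' = p := by
      have hrn := LinearMap.finrank_range_add_finrank_ker tr
      rw [LinearMap.range_eq_top.mpr hsurj, finrank_top, ← hm, ← hd, hmnd] at hrn
      rw [hp]
      have h1 : finrank ℚ (LinearMap.ker tr) = n * d - d := by omega
      rw [hV', h1]
      have : 1 ≤ n := by omega
      rw [Nat.sub_mul, one_mul]
    set W : Submodule ℝ (ι → ℂ) := Submodule.span ℝ (emb '' (V' : Set L)) with hW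
    have hdimW : finrank ℝ W ≤ p := by
      let bV : Basis (Fin (finrank ℚ V')) ℚ V' := Module.finBasis ℚ V'
      let F : V' →ₗ[ℚ] (ι → ℂ) := emb ∘ₗ V'.subtype
      have hsub : emb '' (V' : Set L) ⊆
          (Submodule.span ℝ (Set.range fun i => F (bV i)) : Set (ι → ℂ)) := by
        rintro _ ⟨z, hz, rfl⟩
        have hz' : emb z = F ⟨z, hz⟩ := rfl
        rw [hz']
        have hrepr : F ⟨z, hz⟩ = ∑ i, bV.repr ⟨z, hz⟩ i • F (bV i) := by
          conv_lhs => rw [← bV.sum_repr ⟨z, hz⟩]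
          rw [map_sum]
          refine Finset.sum_congr rfl fun i _ => ?_
          rw [_root_.map_smul]
        rw [hrepr]
        apply Submodule.sum_mem
        intro i _
        have hsmul : bV.repr ⟨z, hz⟩ i • F (bV i) =
            ((bV.repr ⟨z, hz⟩ i : ℝ)) • F (bV i) := by
          funext j
          show (bV.repr ⟨z, hz⟩ i : ℂ) * (F (bV i) j) = _
          rw [Pi.smul_apply, Complex.real_smul, Complex.ofReal_ratCast]
        rw [hsmul]
        exact Submodule.smul_mem _ _ (Submodule.subset_span ⟨i, rfl⟩)
      have hle : W ≤ Submodule.span ℝ (Set.range fun i => F (bV i)) := by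
        rw [hW]
        exact Submodule.span_le.mpr hsub
      calc finrank ℝ W ≤ finrank ℝ (Submodule.span ℝ (Set.range fun i => F (bV i))) :=
            Submodule.finrank_mono hle
        _ ≤ finrank ℚ V' := by
            refine (finrank_span_le_card _).trans ?_
            have h2 := Fintype.card_range_le (fun i => F (bV i))
            rw [← Set.toFinset_card] at h2
            simpa using h2
        _ = p := hV'rank
    -- transfer S into the subspace W
    have hSV : emb '' S ⊆ (W : Set (ι → ℂ)) := by
      rintro _ ⟨x, hx, rfl⟩
      apply Submodule.subset_span
      refine ⟨x, ?_, rfl⟩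
      show x ∈ V'
      rw [hV', LinearMap.mem_ker, htrapply]
      exact hx.2.2.1
    set T : Set W := Subtype.val ⁻¹' (emb '' S) with hT
    have himage : Subtype.val '' T = emb '' S := by
      rw [hT, Set.image_preimage_eq_iff, Subtype.range_coe_subtype]
      exact hSV
    have hTball : T ⊆ Metric.closedBall 0 Y := by
      intro t ht
      rw [Metric.mem_closedBall, dist_zero_right]
      obtain ⟨x, hx, hxe⟩ := ht
      have h1 : ‖(t : ι → ℂ)‖ ≤ Y := by
        rw [← hxe]
        exact hnormY x hx
      rwa [← Submodule.coe_norm] at h1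
    have hTsep : ∀ t₁ ∈ T, ∀ t₂ ∈ T, t₁ ≠ t₂ → μ ≤ dist t₁ t₂ := by
      intro t₁ ht₁ t₂ ht₂ hne
      obtain ⟨x, hx, hxe⟩ := ht₁
      obtain ⟨y, hy, hye⟩ := ht₂
      have hxy : x ≠ y := by
        intro h
        apply hne
        apply Subtype.ext
        rw [← hxe, ← hye, h]
      have hz0 : x - y ≠ 0 := sub_ne_zero.mpr hxy
      have hzint : IsIntegral ℤ (x - y) := (hx.2.1).sub (hy.2.1)
      have hztr : Algebra.trace K L (x - y) = 0 := by
        rw [map_sub, hx.2.2.1, hy.2.2.1, sub_zero]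
      have hss := hsep' (x - y) hz0 hzint hztr
      rw [map_sub, hxe, hye] at hss
      rw [dist_eq_norm]
      exact hss
    obtain ⟨hTfin, hTcard⟩ := sep_finite_card_le (s := T) hμpos hY0.le hTball hTsep
    have hSimfin : (emb '' S).Finite := by
      rw [← himage]
      exact hTfin.image _
    have hSfin : S.Finite := Set.Finite.of_finite_image hSimfin (hembinj.injOn)
    refine ⟨hSfin, ?_⟩
    have hcardeq : Nat.card S = Nat.card T := by
      rw [Nat.card_coe_set_eq, Nat.card_coe_set_eq]
      calc S.ncard = (emb '' S).ncard := (Set.ncard_image_of_injective S hembinj).symm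
        _ = (Subtype.val '' T).ncard := by rw [himage]
        _ = T.ncard := Set.ncard_image_of_injective T Subtype.val_injective
    -- numerics
    have hn1 : (1:ℕ) ≤ n := by omega
    have hpR : ((p:ℕ):ℝ) = ((n:ℝ) - 1) * (d:ℝ) := by
      rw [hp]
      push_cast [Nat.cast_sub hn1]
      ring
    have hnR : (3:ℝ) ≤ (n:ℝ) := by exact_mod_cast hn
    have hdR : (0:ℝ) < (d:ℝ) := by exact_mod_cast hd0
    have hnne : ((n:ℝ)) ≠ 0 := Nat.cast_ne_zero.mpr (by omega)
    have hpne : ((p:ℕ):ℝ) ≠ 0 := Nat.cast_ne_zero.mpr hp0.ne'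
    have heq1 : ((1:ℝ)/e) * (p:ℝ) = 1/(n:ℝ) := by
      rw [he, henp]
      push_cast
      rw [div_mul_eq_mul_div, one_mul, div_eq_div_iff (by positivity) hnne]
      ring
    have hμp : μ ^ p = DD ^ ((1:ℝ)/(n:ℝ)) / 2 ^ p := by
      rw [hμ, div_pow]
      congr 1
      rw [← Real.rpow_natCast (DD ^ ((1:ℝ)/e)) p, ← Real.rpow_mul hDDpos.le, heq1]
    have hEp : (DD ^ (-(1 : ℝ) / ((n : ℝ) * ((n : ℝ) - 1) * (d : ℝ)))) ^ p
        = DD ^ (-((1:ℝ)/(n:ℝ))) := by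
      rw [← Real.rpow_natCast (DD ^ (-(1 : ℝ) / ((n : ℝ) * ((n : ℝ) - 1) * (d : ℝ)))) p,
        ← Real.rpow_mul hDDpos.le]
      congr 1
      rw [hpR]
      have h1 : (n:ℝ) ≠ 0 := by linarith
      have h2 : (n:ℝ) - 1 ≠ 0 := by linarith
      field_simp
    have hμY : μ ≤ Y := le_trans (hsep' x₀ hx₀'.1 hx₀'.2.1 hx₀'.2.2.1) (hnormY x₀ hx₀)
    have hbase1 : (1:ℝ) ≤ (2*Y + μ)/μ := by
      rw [le_div_iff₀ hμpos]
      linarith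
    have hrpowpos : (0:ℝ) < DD ^ ((1:ℝ)/(n:ℝ)) := Real.rpow_pos_of_pos hDDpos _
    calc (Nat.card S : ℝ) = (Nat.card T : ℝ) := by rw [hcardeq]
      _ ≤ ((2*Y + μ)/μ) ^ (finrank ℝ W) := hTcard
      _ ≤ ((2*Y + μ)/μ) ^ p := pow_le_pow_right₀ hbase1 hdimW
      _ ≤ (3*Y/μ) ^ p := by
          apply pow_le_pow_left₀ (by positivity)
          rw [div_le_div_iff₀ hμpos hμpos]
          have : 2*Y + μ ≤ 3*Y := by linarith
          exact mul_le_mul_of_nonneg_right this hμpos.le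
      _ = 6^p * (Y * DD ^ (-(1 : ℝ) / ((n : ℝ) * ((n : ℝ) - 1) * (d : ℝ)))) ^ p := by
          rw [mul_pow Y, hEp, div_pow, hμp, mul_pow 3 Y, Real.rpow_neg hDDpos.le]
          rw [div_div_eq_mul_div, div_eq_mul_inv]
          rw [show ((6:ℝ)) ^ ((n-1)*d) = 2 ^ ((n-1)*d) * 3 ^ ((n-1)*d) by
            rw [← mul_pow]; norm_num]
          ring
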